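/- arXiv:1807.08052 — 4 statements merged into one kernel-verified Lean document; each statement's English description precedes it below -/
import Mathlib

section
/- Let r ≥ 1 and let Π_1,…,Π_r be the elementary symmetric polynomials in the variables X_1,…,X_r over a commutative ring. The determinant of the r×r Jacobian matrix whose (i,j) entry is the partial derivative ∂((−1)^i·Π_i)/∂X_j (1 ≤ i,j ≤ r) equals (−1)^r·∏_{1≤i<j≤r}(X_j − X_i). -/
open MvPolynomial Finset Equiv

section AuxLemmas

variable {R : Type*} [CommRing R]

lemma pderiv_esymm_aux {σ : Type*} [Fintype σ] [DecidableEq σ] (j : σ) (k : ℕ) :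
    pderiv j (esymm σ R (k + 1)) =
      ∑ t ∈ (univ.erase j).powersetCard k, ∏ i ∈ t, X i := by
  have key : ∀ t : Finset σ, ((∑ i ∈ t, Finsupp.single i (1:ℕ)) j) = if j ∈ t then 1 else 0 := by
    intro t
    rw [Finsupp.finset_sum_apply]
    simp [Finsupp.single_apply, Finset.sum_ite_eq' t j (fun _ => 1)]
  calc pderiv j (esymm σ R (k + 1))
      = ∑ t ∈ powersetCard (k+1) (univ : Finset σ),
          (if j ∈ t then monomial (∑ i ∈ t.erase j, Finsupp.single i 1) (1:R) else 0) := by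
        rw [esymm_eq_sum_monomial, map_sum]
        refine Finset.sum_congr rfl (fun t _ => ?_)
        rw [pderiv_monomial]
        by_cases hj : j ∈ t
        · rw [if_pos hj]
          congr 1
          · rw [← Finset.add_sum_erase _ _ hj]
            ext x
            simp
          · rw [key, if_pos hj]; norm_num
        · rw [if_neg hj, key, if_neg hj]
          norm_num
    _ = ∑ t ∈ (powersetCard (k+1) (univ : Finset σ)).filter (fun t => j ∈ t),
          monomial (∑ i ∈ t.erase j, Finsupp.single i 1) (1:R) := (Finset.sum_filter _ _).symm
    _ = ∑ u ∈ (univ.erase j).powersetCard k, monomial (∑ i ∈ u, Finsupp.single i 1) (1:R) := by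
        refine Finset.sum_nbij' (fun t => t.erase j) (fun u => insert j u) ?_ ?_ ?_ ?_ ?_
        · intro t ht
          simp only [mem_filter, mem_powersetCard] at ht ⊢
          exact ⟨fun x hx => Finset.mem_erase.mpr ⟨(Finset.mem_erase.mp hx).1, by simp⟩,
            by rw [Finset.card_erase_of_mem ht.2, ht.1.2]; rfl⟩
        · intro u hu
          simp only [mem_powersetCard, mem_filter] at hu ⊢
          have hj : j ∉ u := fun h => (Finset.mem_erase.mp (hu.1 h)).1 rfl
          exact ⟨⟨fun x _ => Finset.mem_univ x,
            by rw [Finset.card_insert_of_notMem hj, hu.2]⟩, Finset.mem_insert_self j u⟩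
        · intro t ht
          exact Finset.insert_erase (Finset.mem_filter.mp ht).2
        · intro u hu
          exact Finset.erase_insert
            (fun h => (Finset.mem_erase.mp ((Finset.mem_powersetCard.mp hu).1 h)).1 rfl)
        · intro t _; rfl
    _ = ∑ t ∈ (univ.erase j).powersetCard k, ∏ i ∈ t, X i := by
        refine Finset.sum_congr rfl (fun u _ => ?_)
        rw [monomial_sum_one]
        rfl

lemma eval_sum_aux (r : ℕ) (hr : 1 ≤ r) (m j : Fin r) :
    ∑ i ∈ Finset.range r, (-1 : MvPolynomial (Fin r) R) ^ i
        * (∑ t ∈ (univ.erase j).powersetCard i, ∏ a ∈ t, X a)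
        * (X m) ^ (r - 1 - i)
      = ∏ k ∈ univ.erase j, (X m - X k) := by
  classical
  have hcard : Multiset.card ((univ.erase j).val.map (X (R := R))) = r - 1 := by
    simp [Finset.card_erase_of_mem (Finset.mem_univ j)]
  have h := congrArg (Polynomial.eval (X m : MvPolynomial (Fin r) R))
    (Multiset.prod_X_sub_X_eq_sum_esymm ((univ.erase j).val.map (X (R := R))))
  rw [Polynomial.eval_multiset_prod, Multiset.map_map, Multiset.map_map] at h
  rw [Polynomial.eval_finset_sum] at h
  simp only [Function.comp, Polynomial.eval_sub, Polynomial.eval_X, Polynomial.eval_C] at h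
  rw [show ((univ.erase j).val.map
      (fun k => (X m : MvPolynomial (Fin r) R) - X k)).prod
      = ∏ k ∈ univ.erase j, (X m - X k) from (Finset.prod_eq_multiset_prod _ _).symm] at h
  have hr' : r - 1 + 1 = r := Nat.succ_pred_eq_of_pos hr
  rw [hcard, hr'] at h
  rw [h]
  refine Finset.sum_congr rfl (fun i _ => ?_)
  have hesymm : ((univ.val.erase j).map (X (R := R))).esymm i
      = ∑ t ∈ (univ.erase j).powersetCard i, ∏ a ∈ t, X a := by
    rw [show univ.val.erase j = (univ.erase j).val from (Finset.erase_val _ _).symm,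
      Finset.esymm_map_val]
  simp [hesymm, mul_assoc, Polynomial.eval_finset_sum, Polynomial.eval_prod]

lemma prod_erase_split {M : Type*} [CommMonoid M] (r : ℕ) (f : Fin r → Fin r → M) :
    ∏ j, ∏ k ∈ univ.erase j, f j k
      = (∏ p ∈ univ.filter (fun p : Fin r × Fin r => p.1 < p.2), f p.1 p.2)
        * ∏ p ∈ univ.filter (fun p : Fin r × Fin r => p.1 < p.2), f p.2 p.1 := by
  classical
  have h1 : ∏ j, ∏ k ∈ univ.erase j, f j k = ∏ p ∈ (univ : Finset (Fin r)).offDiag, f p.1 p.2 := by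
    rw [← Finset.prod_sigma (univ : Finset (Fin r)) (fun j => univ.erase j) (fun p => f p.1 p.2)]
    refine Finset.prod_nbij' (fun p => (p.1, p.2)) (fun p => ⟨p.1, p.2⟩) ?_ ?_ ?_ ?_ ?_
    · intro p hp
      simp only [Finset.mem_sigma, Finset.mem_erase] at hp
      simp [Finset.mem_offDiag]
      exact fun h => hp.2.1 h.symm
    · intro p hp
      simp only [Finset.mem_offDiag] at hp
      simp [Finset.mem_sigma, Finset.mem_erase]
      exact fun h => hp.2.2 h.symm
    · intro p _; rfl
    · intro p _; rfl
    · intro p _; rfl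
  have h2 : (univ : Finset (Fin r)).offDiag
      = univ.filter (fun p : Fin r × Fin r => p.1 < p.2)
        ∪ univ.filter (fun p : Fin r × Fin r => p.2 < p.1) := by
    ext p
    simp only [Finset.mem_offDiag, Finset.mem_union, Finset.mem_filter, Finset.mem_univ,
      true_and]
    constructor
    · intro h; exact lt_or_gt_of_ne h
    · rintro (h | h); exacts [h.ne, h.ne']
  have hdisj : Disjoint (univ.filter (fun p : Fin r × Fin r => p.1 < p.2))
      (univ.filter (fun p : Fin r × Fin r => p.2 < p.1)) := by
    rw [Finset.disjoint_filter]
    intro p _ h1 h2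
    omega
  rw [h1, h2, Finset.prod_union hdisj]
  congr 1
  refine Finset.prod_nbij' Prod.swap Prod.swap ?_ ?_ ?_ ?_ ?_ <;>
    simp [Finset.mem_filter]

lemma card_lt_pairs (r : ℕ) :
    #(univ.filter (fun p : Fin r × Fin r => p.1 < p.2)) = r * (r-1) / 2 := by
  classical
  have h2 : (univ : Finset (Fin r)).offDiag
      = univ.filter (fun p : Fin r × Fin r => p.1 < p.2)
        ∪ univ.filter (fun p : Fin r × Fin r => p.2 < p.1) := by
    ext p
    simp only [Finset.mem_offDiag, Finset.mem_union, Finset.mem_filter, Finset.mem_univ,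
      true_and]
    constructor
    · intro h; exact lt_or_gt_of_ne h
    · rintro (h | h); exacts [h.ne, h.ne']
  have hdisj : Disjoint (univ.filter (fun p : Fin r × Fin r => p.1 < p.2))
      (univ.filter (fun p : Fin r × Fin r => p.2 < p.1)) := by
    rw [Finset.disjoint_filter]
    intro p _ h1 h2
    omega
  have hcard2 : #(univ.filter (fun p : Fin r × Fin r => p.2 < p.1))
      = #(univ.filter (fun p : Fin r × Fin r => p.1 < p.2)) :=
    Finset.card_nbij' Prod.swap Prod.swap (by intro p hp; simpa using hp) (by intro p hp; simpa using hp)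
      (by intro p _; simp) (by intro p _; simp)
  have hoff := Finset.offDiag_card (univ : Finset (Fin r))
  rw [h2, Finset.card_union_of_disjoint hdisj, hcard2] at hoff
  simp only [Finset.card_univ, Fintype.card_fin] at hoff
  have h3 : r * (r-1) = r * r - r := by
    cases r with
    | zero => rfl
    | succ m =>
      simp only [Nat.succ_sub_one]
      rw [Nat.mul_succ, Nat.add_sub_cancel]
  rw [h3]
  set q := r * r with hq
  omega

lemma prod_Ioi_eq_filter {M : Type*} [CommMonoid M] (r : ℕ) (f : Fin r → Fin r → M) :
    ∏ i, ∏ j ∈ Finset.Ioi i, f i j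
      = ∏ p ∈ univ.filter (fun p : Fin r × Fin r => p.1 < p.2), f p.1 p.2 := by
  rw [← Finset.prod_sigma (univ : Finset (Fin r)) (fun i => Finset.Ioi i) (fun p => f p.1 p.2)]
  refine Finset.prod_nbij' (fun p => (p.1, p.2)) (fun p => ⟨p.1, p.2⟩) ?_ ?_ ?_ ?_ ?_
  · intro p hp
    simp only [Finset.mem_sigma, Finset.mem_Ioi] at hp
    simp [hp.2]
  · intro p hp
    simp only [Finset.mem_filter] at hp
    simp [Finset.mem_Ioi, hp.2]
  · intro p _; rfl
  · intro p _; rfl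
  · intro p _; rfl

end AuxLemmas

section SignRev

lemma revPerm_succ_decomp (n : ℕ) :
    (Fin.revPerm : Perm (Fin (n+1))) =
      finRotate (n+1) * (finSuccEquivLast.symm.permCongr
        (Equiv.optionCongr (Fin.revPerm : Perm (Fin n)))) := by
  ext i
  simp only [Perm.mul_apply, permCongr_apply, Equiv.symm_symm]
  refine Fin.lastCases ?_ (fun i => ?_) i
  · simp [finSuccEquivLast_last]
  · simp only [finSuccEquivLast_castSucc, optionCongr_apply, Option.map_some,
      Fin.revPerm_apply, finSuccEquivLast_symm_some, finRotate_succ_apply]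
    simp only [Fin.val_rev, Fin.coe_castSucc]
    rw [Fin.val_add_one]
    have hi : i.rev.castSucc ≠ Fin.last n := by
      simp [Fin.ext_iff, Fin.val_rev]
      omega
    rw [if_neg hi]
    simp [Fin.val_rev]
    omega

lemma sign_revPerm (n : ℕ) :
    Perm.sign (Fin.revPerm : Perm (Fin n)) = (-1) ^ (n * (n-1) / 2) := by
  induction n with
  | zero => simp [Subsingleton.elim (Fin.revPerm : Perm (Fin 0)) 1]
  | succ n ih =>
    rw [revPerm_succ_decomp, map_mul, sign_finRotate, Perm.sign_permCongr,
      Equiv.optionCongr_sign, ih, ← pow_add]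
    congr 1
    have h : (n+1) * (n+1-1) = n*(n-1) + n*2 := by
      cases n with
      | zero => rfl
      | succ m => simp only [Nat.succ_sub_one]; ring
    rw [h]
    set q := n * (n - 1) with hq
    omega

end SignRev

section IntCase

/-- The main determinant identity over `ℤ`. -/
lemma det_jacobian_signed_esymm_int (r : ℕ) (hr : 1 ≤ r) :
    Matrix.det (Matrix.of fun i j : Fin r =>
      MvPolynomial.pderiv j
        ((-1 : MvPolynomial (Fin r) ℤ) ^ ((i : ℕ) + 1)
          * MvPolynomial.esymm (Fin r) ℤ ((i : ℕ) + 1)))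
      = (-1 : MvPolynomial (Fin r) ℤ) ^ r
          * ∏ p ∈ Finset.univ.filter (fun p : Fin r × Fin r => p.1 < p.2),
              (MvPolynomial.X p.2 - MvPolynomial.X p.1) := by
  classical
  set A := MvPolynomial (Fin r) ℤ
  set Pd : A := ∏ p ∈ Finset.univ.filter (fun p : Fin r × Fin r => p.1 < p.2),
      (MvPolynomial.X p.2 - MvPolynomial.X p.1) with hPd
  set M : Matrix (Fin r) (Fin r) A := Matrix.of fun i j : Fin r =>
      MvPolynomial.pderiv j
        ((-1 : A) ^ ((i : ℕ) + 1) * MvPolynomial.esymm (Fin r) ℤ ((i : ℕ) + 1)) with hM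
  set V : Matrix (Fin r) (Fin r) A := Matrix.of fun m i : Fin r =>
      (X m : A) ^ (r - 1 - (i : ℕ)) with hV
  -- V * M is diagonal
  have hVM : V * M = Matrix.diagonal (fun j => -(∏ k ∈ univ.erase j, (X j - X k))) := by
    refine Matrix.ext (fun m j => ?_)
    rw [Matrix.mul_apply]
    have hentry : ∀ i : Fin r, V m i * M i j
        = -((-1 : A) ^ (i : ℕ)
            * (∑ t ∈ (univ.erase j).powersetCard (i : ℕ), ∏ a ∈ t, X a)
            * (X m) ^ (r - 1 - (i : ℕ))) := by
      intro i
      rw [hM, hV]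
      simp only [Matrix.of_apply]
      have hc : ((-1 : A) ^ ((i : ℕ) + 1)) = C ((-1 : ℤ) ^ ((i : ℕ) + 1)) := by
        simp [map_pow]
      rw [hc, pderiv_C_mul, pderiv_esymm_aux j (i : ℕ), ← hc]
      ring
    rw [Finset.sum_congr rfl (fun i _ => hentry i), Finset.sum_neg_distrib]
    rw [Fin.sum_univ_eq_sum_range (fun i => (-1 : A) ^ i
        * (∑ t ∈ (univ.erase j).powersetCard i, ∏ a ∈ t, X a) * (X m) ^ (r - 1 - i)) r]
    rw [eval_sum_aux r hr m j]
    by_cases hmj : m = j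
    · subst hmj
      rw [Matrix.diagonal_apply_eq]
    · have h0 : ∏ k ∈ univ.erase j, ((X m : A) - X k) = 0 :=
        Finset.prod_eq_zero (Finset.mem_erase.mpr ⟨hmj, Finset.mem_univ m⟩) (sub_self _)
      rw [Matrix.diagonal_apply_ne _ hmj, h0, neg_zero]
  -- determinant of V
  have hdetV : V.det = ((-1 : A) ^ (r * (r-1) / 2)) * Pd := by
    have hVsub : V = (Matrix.vandermonde (fun m : Fin r => (X m : A))).submatrix id
        (Fin.revPerm : Perm (Fin r)) := by
      ext m i
      simp only [Matrix.submatrix_apply, Matrix.vandermonde_apply, id_eq, hV, Matrix.of_apply,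
        Fin.revPerm_apply, Fin.val_rev]
      rw [Nat.sub_sub, Nat.add_comm]
    rw [hVsub, Matrix.det_permute', sign_revPerm, Matrix.det_vandermonde]
    rw [prod_Ioi_eq_filter r (fun i j => (X j : A) - X i)]
    rw [← hPd]
    congr 1
    rw [Units.val_pow_eq_pow_val]
    push_cast
    rfl
  -- determinant of the diagonal matrix
  have hdetD : (Matrix.diagonal (fun j : Fin r => -(∏ k ∈ univ.erase j, (X j - X k : A)))).det
      = (-1 : A) ^ r * (((-1 : A) ^ (r * (r-1) / 2)) * Pd) * Pd := by
    rw [Matrix.det_diagonal]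
    have : ∀ j : Fin r, -(∏ k ∈ univ.erase j, (X j - X k : A))
        = (-1 : A) * ∏ k ∈ univ.erase j, (X j - X k) := by intro j; ring
    rw [Finset.prod_congr rfl (fun j _ => this j), Finset.prod_mul_distrib,
      Finset.prod_const, Finset.card_univ, Fintype.card_fin]
    rw [prod_erase_split r (fun j k => (X j : A) - X k)]
    have hfirst : (∏ p ∈ univ.filter (fun p : Fin r × Fin r => p.1 < p.2),
        ((X p.1 : A) - X p.2)) = (-1 : A) ^ (r * (r-1) / 2) * Pd := by
      rw [← card_lt_pairs r]
      rw [hPd, ← Finset.prod_const, ← Finset.prod_mul_distrib]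
      exact Finset.prod_congr rfl (fun p _ => by ring)
    rw [hfirst, hPd]
    ring
  -- nonvanishing
  have hPne : Pd ≠ 0 := by
    rw [hPd]
    rw [Finset.prod_ne_zero_iff]
    intro p hp
    have hlt : p.1 < p.2 := (Finset.mem_filter.mp hp).2
    exact sub_ne_zero.mpr (fun h => absurd (X_injective h) hlt.ne')
  have hcne : ((-1 : A) ^ (r * (r-1) / 2)) * Pd ≠ 0 :=
    mul_ne_zero (pow_ne_zero _ (by norm_num)) hPne
  have heq : V.det * M.det = (-1 : A) ^ r * (((-1 : A) ^ (r * (r-1) / 2)) * Pd) * Pd := by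
    rw [← Matrix.det_mul, hVM, hdetD]
  rw [hdetV] at heq
  have heq2 : ((-1 : A) ^ (r * (r-1) / 2) * Pd) * M.det
      = ((-1 : A) ^ (r * (r-1) / 2) * Pd) * ((-1 : A) ^ r * Pd) := by
    linear_combination heq
  exact mul_left_cancel₀ hcne heq2

end IntCase

/-- The determinant of the Jacobian matrix of the signed elementary symmetric polynomials
`(-1)^i Π_i` (for `1 ≤ i ≤ r`) with respect to `X_1, …, X_r` equals
`(-1)^r ∏_{i < j} (X_j - X_i)`. Here the index `i : Fin r` corresponds to `Π_{i+1}` and the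
index `j : Fin r` to the variable `X_j`. -/
theorem det_jacobian_signed_esymm (R : Type) [CommRing R] (r : ℕ) (hr : 1 ≤ r) :
    Matrix.det (Matrix.of fun i j : Fin r =>
      MvPolynomial.pderiv j
        ((-1 : MvPolynomial (Fin r) R) ^ ((i : ℕ) + 1)
          * MvPolynomial.esymm (Fin r) R ((i : ℕ) + 1)))
      = (-1 : MvPolynomial (Fin r) R) ^ r
          * ∏ p ∈ Finset.univ.filter (fun p : Fin r × Fin r => p.1 < p.2),
              (MvPolynomial.X p.2 - MvPolynomial.X p.1) := by
  classical
  set φ : MvPolynomial (Fin r) ℤ →+* MvPolynomial (Fin r) R :=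
    (MvPolynomial.map (Int.castRingHom R)) with hφ
  have hmat : (Matrix.of fun i j : Fin r =>
      MvPolynomial.pderiv j
        ((-1 : MvPolynomial (Fin r) R) ^ ((i : ℕ) + 1)
          * MvPolynomial.esymm (Fin r) R ((i : ℕ) + 1)))
      = (Matrix.of fun i j : Fin r =>
          MvPolynomial.pderiv j
            ((-1 : MvPolynomial (Fin r) ℤ) ^ ((i : ℕ) + 1)
              * MvPolynomial.esymm (Fin r) ℤ ((i : ℕ) + 1))).map φ := by
    refine Matrix.ext (fun i j => ?_)
    simp only [Matrix.map_apply, Matrix.of_apply, hφ]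
    rw [← pderiv_map]
    congr 1
    rw [map_mul, map_pow, map_neg, map_one, map_esymm]
  rw [hmat, ← RingHom.mapMatrix_apply, ← RingHom.map_det, det_jacobian_signed_esymm_int r hr]
  rw [map_mul, map_pow, map_neg, map_one, map_prod]
  simp [hφ]
end

section
/- Let r ≥ 1 and fix l with 1 ≤ l ≤ r. Let H_i denote the complete homogeneous symmetric polynomial of degree i in the variables X_1,…,X_r, and let Π*_j denote the j-th elementary symmetric polynomial in the r−1 variables X_1,…,X_{l−1},X_{l+1},…,X_r. Then for every k with 0 ≤ k ≤ r−1, ∑_{i=0}^{k} (−1)^{r−i−1}·H_i·Π*_{k−i} = (−1)^{r−k−1}·X_l^k. -/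
open MvPolynomial

namespace HsymmGF

open Finset

set_option linter.unusedSectionVars false

variable {R : Type} [CommRing R] {σ : Type} [Fintype σ] [DecidableEq σ] {n : ℕ}

lemma sum_univ_eq_finsupp_sum (f : σ →₀ ℕ) : univ.sum ⇑f = f.sum fun _ => id :=
  (Finsupp.sum_fintype f (fun _ => id) (fun _ => rfl)).symm

lemma card_aux (f : σ →₀ ℕ) (hf : f ∈ finsuppAntidiag (univ : Finset σ) n) :
    Multiset.card (Finsupp.toMultiset f) = n := by
  rw [Finset.mem_finsuppAntidiag] at hf
  rw [Finsupp.card_toMultiset, ← sum_univ_eq_finsupp_sum, hf.1]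

lemma hsymm_eq_sum_finsuppAntidiag : (hsymm σ R n)
    = ∑ l ∈ finsuppAntidiag (univ : Finset σ) n, ∏ i : σ, (X i : MvPolynomial σ R) ^ l i := by
  rw [hsymm]
  apply Finset.sum_bij' (fun (s : Sym σ n) (_ : s ∈ univ) => Multiset.toFinsupp (s.1 : Multiset σ))
    (j := fun f hf => (⟨Finsupp.toMultiset f, card_aux f hf⟩ : Sym σ n))
  case left_neg => intro s _; exact Sym.ext (by simp)
  case right_neg => intro f _; simp
  case h =>
    intro s _
    rw [Finset.prod_multiset_map_count]
    refine (Finset.prod_subset (Finset.subset_univ _) ?_).trans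
      (Finset.prod_congr rfl fun v _ => by simp)
    intro v _ hv
    rw [Multiset.count_eq_zero_of_notMem (by simpa using hv), pow_zero]
  case hi =>
    intro s _
    rw [Finset.mem_finsuppAntidiag]
    refine ⟨?_, Finset.subset_univ _⟩
    rw [sum_univ_eq_finsupp_sum, Multiset.toFinsupp_sum_eq, s.2]
  case hj => intro f _; exact Finset.mem_univ _

/-- geometric series -/
noncomputable def geo (a : MvPolynomial σ R) : PowerSeries (MvPolynomial σ R) :=
  PowerSeries.mk fun n => a ^ n

lemma one_sub_mul_geo (a : MvPolynomial σ R) :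
    (1 - PowerSeries.C a * PowerSeries.X) * geo a = 1 := by
  refine PowerSeries.ext fun n => ?_
  rw [sub_mul, one_mul, map_sub, mul_assoc]
  cases n with
  | zero => simp [geo]
  | succ n =>
      rw [PowerSeries.coeff_C_mul, PowerSeries.coeff_succ_X_mul]
      simp [geo, pow_succ']

lemma mk_hsymm_eq :
    (PowerSeries.mk fun n => hsymm σ R n) = ∏ v : σ, geo (X v : MvPolynomial σ R) := by
  refine PowerSeries.ext fun m => ?_
  rw [PowerSeries.coeff_mk, PowerSeries.coeff_prod, hsymm_eq_sum_finsuppAntidiag]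
  apply Finset.sum_congr rfl
  intro f _
  apply Finset.prod_congr rfl
  intro v _
  rw [geo, PowerSeries.coeff_mk]

lemma prod_one_sub_mul_mk_hsymm :
    (∏ v : σ, (1 - PowerSeries.C (X v : MvPolynomial σ R) * PowerSeries.X))
      * (PowerSeries.mk fun n => hsymm σ R n) = 1 := by
  rw [mk_hsymm_eq, ← Finset.prod_mul_distrib]
  simp [one_sub_mul_geo]

lemma coeff_prod_one_sub (s : Finset σ) (n : ℕ) :
    PowerSeries.coeff n (∏ v ∈ s, (1 - PowerSeries.C (X v : MvPolynomial σ R) * PowerSeries.X))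
      = (-1) ^ n * ∑ t ∈ Finset.powersetCard n s, ∏ v ∈ t, (X v : MvPolynomial σ R) := by
  induction s using Finset.induction generalizing n with
  | empty =>
      cases n with
      | zero => simp
      | succ n =>
          rw [Finset.powersetCard_eq_empty.2 (by simp)]
          simp [PowerSeries.coeff_one]
  | insert a s ha ih =>
      rw [Finset.prod_insert ha, sub_mul, one_mul, map_sub, ih, mul_assoc,
        PowerSeries.coeff_C_mul]
      cases n with
      | zero =>
          simp [ha]
      | succ n =>
          have hnotmem : ∀ x ∈ Finset.powersetCard n s, a ∉ x := by
            intro x hx h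
            rw [Finset.mem_powersetCard] at hx
            exact ha (hx.1 h)
          have hinj : ∀ t ∈ Finset.powersetCard n s, ∀ u ∈ Finset.powersetCard n s,
              insert a t = insert a u → t = u := by
            intro t ht u hu htu
            rw [← Finset.erase_insert (hnotmem t ht), ← Finset.erase_insert (hnotmem u hu), htu]
          have hdisj : Disjoint (Finset.powersetCard (n+1) s)
              ((Finset.powersetCard n s).image (insert a)) := by
            rw [Finset.disjoint_right]
            rintro t ht hts
            simp only [Finset.mem_image] at ht
            obtain ⟨u, _, rfl⟩ := ht
            rw [Finset.mem_powersetCard] at hts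
            exact ha (hts.1 (Finset.mem_insert_self a u))
          rw [PowerSeries.coeff_succ_X_mul, ih, Finset.powersetCard_succ_insert ha,
            Finset.sum_union hdisj, Finset.sum_image hinj]
          have h1 : ∀ t ∈ Finset.powersetCard n s,
              ∏ v ∈ insert a t, (X v : MvPolynomial σ R) = X a * ∏ v ∈ t, X v := by
            intro t ht
            exact Finset.prod_insert (hnotmem t ht)
          rw [Finset.sum_congr rfl h1, ← Finset.mul_sum]
          ring

end HsymmGF


/-- For `0 ≤ k ≤ r - 1` and a variable index `l`,
`∑_{i=0}^{k} (-1)^{r-i-1} H_i Π*_{k-i} = (-1)^{r-k-1} X_l^k`, where `H_i` is the complete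
homogeneous symmetric polynomial of degree `i` in `X_1, …, X_r` and `Π*_j` is the `j`-th
elementary symmetric polynomial in the variables `X_1, …, X_r` with `X_l` omitted. -/
theorem hsymm_esymm_omit_alternating_sum (R : Type) [CommRing R] (r : ℕ) (hr : 1 ≤ r)
    (l : Fin r) (k : ℕ) (hk : k ≤ r - 1) :
    ∑ i ∈ Finset.range (k + 1),
        (-1 : MvPolynomial (Fin r) R) ^ (r - i - 1)
          * MvPolynomial.hsymm (Fin r) R i
          * ∑ t ∈ Finset.powersetCard (k - i) (Finset.univ.erase l),
              ∏ v ∈ t, MvPolynomial.X v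
      = (-1 : MvPolynomial (Fin r) R) ^ (r - k - 1) * MvPolynomial.X l ^ k := by
  classical
  have h0 : (∏ v : Fin r, (1 - PowerSeries.C (R := MvPolynomial (Fin r) R) (X v) * PowerSeries.X))
      = (1 - PowerSeries.C (X l) * PowerSeries.X)
        * ∏ v ∈ Finset.univ.erase l, (1 - PowerSeries.C (X v) * PowerSeries.X) :=
    (Finset.mul_prod_erase Finset.univ _ (Finset.mem_univ l)).symm
  have h1 := HsymmGF.prod_one_sub_mul_mk_hsymm (R := R) (σ := Fin r)
  have h2 : (PowerSeries.mk fun n => hsymm (Fin r) R n)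
      * (∏ v ∈ Finset.univ.erase l, (1 - PowerSeries.C (X v) * PowerSeries.X))
      = HsymmGF.geo (X l) := by
    calc (PowerSeries.mk fun n => hsymm (Fin r) R n)
          * (∏ v ∈ Finset.univ.erase l, (1 - PowerSeries.C (X v) * PowerSeries.X))
        = ((PowerSeries.mk fun n => hsymm (Fin r) R n)
            * (∏ v ∈ Finset.univ.erase l, (1 - PowerSeries.C (X v) * PowerSeries.X)))
          * ((1 - PowerSeries.C (X l) * PowerSeries.X) * HsymmGF.geo (X l)) := by
          rw [HsymmGF.one_sub_mul_geo, mul_one]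
      _ = ((∏ v : Fin r, (1 - PowerSeries.C (R := MvPolynomial (Fin r) R) (X v) * PowerSeries.X))
            * (PowerSeries.mk fun n => hsymm (Fin r) R n)) * HsymmGF.geo (X l) := by
          rw [h0]; ring
      _ = HsymmGF.geo (X l) := by rw [h1, one_mul]
  have key : ∑ i ∈ Finset.range (k + 1),
      hsymm (Fin r) R i * ((-1 : MvPolynomial (Fin r) R) ^ (k - i)
        * ∑ t ∈ Finset.powersetCard (k - i) (Finset.univ.erase l), ∏ v ∈ t, X v)
      = (X l : MvPolynomial (Fin r) R) ^ k := by
    have h3 := congrArg (PowerSeries.coeff (R := MvPolynomial (Fin r) R) k) h2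
    rw [PowerSeries.coeff_mul, Finset.Nat.sum_antidiagonal_eq_sum_range_succ_mk] at h3
    simp only [PowerSeries.coeff_mk, HsymmGF.coeff_prod_one_sub, HsymmGF.geo] at h3
    exact h3
  rw [← key, Finset.mul_sum]
  apply Finset.sum_congr rfl
  intro i hi
  rw [Finset.mem_range] at hi
  have harith : r - i - 1 = (r - k - 1) + (k - i) := by omega
  rw [harith, pow_add]
  ring
end

section
/- Let G be a nonzero polynomial over F_q in the variables A_{r−1},…,A_{k+1},A_{k−1},…,A_0, let d := wt(G) be its weighted total degree and G^wt its component of highest weight. Let R ∈ F_q[X_1,…,X_r] be obtained from G by substituting (−1)^{r−j}·Π_{r−j} for A_j (for every j ≠ k). Then R is nonzero, the total degree of R equals d, and the homogeneous component of R of degree d equals the polynomial obtained from G^wt by the same substitution A_j ↦ (−1)^{r−j}·Π_{r−j}. -/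
open MvPolynomial

lemma esymm_isHomogeneous' (σ R : Type*) [CommSemiring R] [Fintype σ] (n : ℕ) :
    (MvPolynomial.esymm σ R n).IsHomogeneous n := by
  rw [MvPolynomial.esymm]
  apply MvPolynomial.IsHomogeneous.sum _ _ n
  intro t ht
  have : (∏ i ∈ t, (X i : MvPolynomial σ R)).IsHomogeneous (∑ _i ∈ t, 1) :=
    MvPolynomial.IsHomogeneous.prod t _ _ (fun i _ => isHomogeneous_X R i)
  simpa [Finset.mem_powersetCard.mp ht |>.2] using this

lemma aeval_isHomogeneous_of_isWeightedHomogeneous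
    {σ τ R : Type*} [CommSemiring R] (w : σ → ℕ) (f : σ → MvPolynomial τ R)
    (hf : ∀ j, (f j).IsHomogeneous (w j)) {p : MvPolynomial σ R} {n : ℕ}
    (hp : p.IsWeightedHomogeneous w n) :
    ((MvPolynomial.aeval f) p).IsHomogeneous n := by
  classical
  rw [← p.support_sum_monomial_coeff, map_sum]
  apply MvPolynomial.IsHomogeneous.sum _ _ n
  intro m hm
  rw [MvPolynomial.aeval_monomial]
  have h1 : ((Finsupp.prod m fun i e => f i ^ e)).IsHomogeneous
      (∑ i ∈ m.support, w i * m i) := by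
    apply MvPolynomial.IsHomogeneous.prod m.support _ _
    intro i _
    exact (hf i).pow (m i)
  have h2 : (∑ i ∈ m.support, w i * m i) = n := by
    have := hp (MvPolynomial.mem_support_iff.mp hm)
    rw [← this]
    simp only [Finsupp.weight, Finsupp.linearCombination, Finsupp.sum,
      LinearMap.coe_smulRight, LinearMap.id_coe, id_eq, Finsupp.coe_lsum, LinearMap.coe_mk,
      AddHom.coe_mk, smul_eq_mul]
    exact Finset.sum_congr rfl fun i _ => mul_comm _ _
  rw [h2] at h1
  have h0 : ((algebraMap R (MvPolynomial τ R)) (MvPolynomial.coeff m p)).IsHomogeneous 0 := by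
    rw [MvPolynomial.algebraMap_eq]
    exact MvPolynomial.isHomogeneous_C τ _
  simpa using h0.mul h1

lemma sum_range_weightedHomogeneousComponent
    {σ R : Type*} [CommSemiring R] (w : σ → ℕ) (p : MvPolynomial σ R) {d : ℕ}
    (h : MvPolynomial.weightedTotalDegree w p ≤ d) :
    ∑ n ∈ Finset.range (d + 1), MvPolynomial.weightedHomogeneousComponent w n p = p := by
  classical
  ext m
  rw [MvPolynomial.coeff_sum]
  rw [Finset.sum_eq_single ((Finsupp.weight w) m)]
  · rw [MvPolynomial.coeff_weightedHomogeneousComponent, if_pos rfl]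
  · intro b _ hb
    rw [MvPolynomial.coeff_weightedHomogeneousComponent, if_neg (fun hh => hb hh.symm)]
  · intro hmem
    rw [MvPolynomial.coeff_weightedHomogeneousComponent, if_pos rfl]
    by_contra hc
    apply hmem
    rw [Finset.mem_range, Nat.lt_succ_iff]
    exact le_trans (MvPolynomial.le_weightedTotalDegree w
      (MvPolynomial.mem_support_iff.mpr hc)) h

lemma weightedHomogeneousComponent_top_ne_zero
    {σ R : Type*} [CommSemiring R] (w : σ → ℕ) {p : MvPolynomial σ R} (hp : p ≠ 0) :
    MvPolynomial.weightedHomogeneousComponent w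
      (MvPolynomial.weightedTotalDegree w p) p ≠ 0 := by
  classical
  obtain ⟨m, hm, hm2⟩ := Finset.exists_mem_eq_sup p.support
    (MvPolynomial.support_nonempty.mpr hp) (fun m => (Finsupp.weight w) m)
  intro h0
  have hwm : (Finsupp.weight w) m = MvPolynomial.weightedTotalDegree w p := by
    rw [MvPolynomial.weightedTotalDegree]; exact hm2.symm
  have hco : MvPolynomial.coeff m (MvPolynomial.weightedHomogeneousComponent w
      (MvPolynomial.weightedTotalDegree w p) p) = MvPolynomial.coeff m p := by
    rw [MvPolynomial.coeff_weightedHomogeneousComponent, if_pos hwm]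
  rw [h0, MvPolynomial.coeff_zero] at hco
  exact (MvPolynomial.mem_support_iff.mp hm) hco.symm

/-- Let `G` be a nonzero polynomial in the variables `A_j` (`j ≠ k`), each `A_j` of weight
`r - j`, let `d` be its weighted total degree and `G^wt` its component of highest weight.
If `R` is obtained from `G` by the substitution `A_j ↦ (-1)^{r-j} Π_{r-j}` into the
elementary symmetric polynomials of `X_1, …, X_r`, then `R ≠ 0`, the total degree of `R`
equals `d`, and the homogeneous component of `R` of degree `d` is the image of `G^wt` under
the same substitution. -/
theorem substitution_degree_and_highest_component
    (Fq : Type) [Field Fq] [Fintype Fq]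
    (r : ℕ) (hr : 1 ≤ r) (k : Fin r)
    (G : MvPolynomial {j : Fin r // j ≠ k} Fq) (hG : G ≠ 0)
    (d : ℕ)
    (hd : d = MvPolynomial.weightedTotalDegree
        (fun j : {j : Fin r // j ≠ k} => r - (j.1 : ℕ)) G)
    (R : MvPolynomial (Fin r) Fq)
    (hR : R = MvPolynomial.aeval
        (fun j : {j : Fin r // j ≠ k} =>
          (-1 : MvPolynomial (Fin r) Fq) ^ (r - (j.1 : ℕ))
            * MvPolynomial.esymm (Fin r) Fq (r - (j.1 : ℕ))) G) :
    R ≠ 0 ∧ R.totalDegree = d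
      ∧ MvPolynomial.homogeneousComponent d R
        = MvPolynomial.aeval
            (fun j : {j : Fin r // j ≠ k} =>
              (-1 : MvPolynomial (Fin r) Fq) ^ (r - (j.1 : ℕ))
                * MvPolynomial.esymm (Fin r) Fq (r - (j.1 : ℕ)))
            (MvPolynomial.weightedHomogeneousComponent
              (fun j : {j : Fin r // j ≠ k} => r - (j.1 : ℕ)) d G) := by
  classical
  set w : {j : Fin r // j ≠ k} → ℕ := fun j => r - (j.1 : ℕ) with hwdef
  set f : {j : Fin r // j ≠ k} → MvPolynomial (Fin r) Fq := fun j =>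
    (-1 : MvPolynomial (Fin r) Fq) ^ (r - (j.1 : ℕ))
      * MvPolynomial.esymm (Fin r) Fq (r - (j.1 : ℕ)) with hfdef
  have hfhom : ∀ j, (f j).IsHomogeneous (w j) := by
    intro j
    have h1 : ((-1 : MvPolynomial (Fin r) Fq) ^ (r - (j.1 : ℕ))).IsHomogeneous 0 := by
      have : (-1 : MvPolynomial (Fin r) Fq) = MvPolynomial.C (-1 : Fq) := by simp
      rw [this, ← MvPolynomial.C_pow]
      exact MvPolynomial.isHomogeneous_C _ _
    simpa [hfdef, hwdef] using h1.mul (esymm_isHomogeneous' (Fin r) Fq (r - (j.1 : ℕ)))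
  -- the substitution algebra homomorphism
  set Φ : MvPolynomial {j : Fin r // j ≠ k} Fq →ₐ[Fq] MvPolynomial (Fin r) Fq :=
    MvPolynomial.aeval f with hPhidef
  -- `Φ` is injective
  set sc : MvPolynomial {j : Fin r // j ≠ k} Fq →ₐ[Fq] MvPolynomial {j : Fin r // j ≠ k} Fq :=
    MvPolynomial.aeval (fun j => MvPolynomial.C ((-1 : Fq) ^ (w j)) * MvPolynomial.X j)
    with hscdef
  have hsc2 : sc.comp sc = AlgHom.id Fq _ := by
    apply MvPolynomial.algHom_ext
    intro j
    simp only [AlgHom.comp_apply, hscdef, MvPolynomial.aeval_X, AlgHom.id_apply,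
      map_mul, MvPolynomial.algHom_C, MvPolynomial.aeval_C]
    rw [MvPolynomial.algebraMap_eq, ← mul_assoc, ← MvPolynomial.C_mul, ← mul_pow,
      neg_mul_neg, one_mul, one_pow, MvPolynomial.C_1, one_mul]
  have hscinj : Function.Injective sc := by
    intro a b hab
    have ha := DFunLike.congr_fun hsc2 a
    have hb := DFunLike.congr_fun hsc2 b
    simp only [AlgHom.comp_apply, AlgHom.id_apply] at ha hb
    rw [← ha, ← hb, hab]
  set e : {j : Fin r // j ≠ k} → Fin r := fun j => ⟨r - 1 - (j.1 : ℕ), by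
    have := j.1.2; omega⟩ with hedef
  have heinj : Function.Injective e := by
    intro a b hab
    have ha := a.1.2
    have hb := b.1.2
    have h := congrArg Fin.val hab
    simp only [hedef] at h
    apply Subtype.ext; apply Fin.ext; omega
  have hfactor : Φ = (((MvPolynomial.symmetricSubalgebra (Fin r) Fq).val.comp
      (MvPolynomial.esymmAlgHom (Fin r) Fq r)).comp
        (MvPolynomial.rename e : MvPolynomial {j : Fin r // j ≠ k} Fq →ₐ[Fq]
          MvPolynomial (Fin r) Fq)).comp sc := by
    apply MvPolynomial.algHom_ext
    intro j
    have hj := j.1.2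
    simp only [AlgHom.comp_apply, hPhidef, hscdef, MvPolynomial.aeval_X, map_mul,
      MvPolynomial.rename_C, MvPolynomial.rename_X, MvPolynomial.algHom_C,
      MvPolynomial.aeval_C]
    have h2 : ((MvPolynomial.symmetricSubalgebra (Fin r) Fq).val
        ((MvPolynomial.esymmAlgHom (Fin r) Fq r) (MvPolynomial.X (e j))))
        = MvPolynomial.esymm (Fin r) Fq ((e j : ℕ) + 1) := by
      simp [MvPolynomial.esymmAlgHom]
    have hej : ((e j : ℕ) + 1) = r - (j.1 : ℕ) := by
      simp only [hedef]; omega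
    have h1 : ((MvPolynomial.symmetricSubalgebra (Fin r) Fq).val
        ((MvPolynomial.esymmAlgHom (Fin r) Fq r)
          ((algebraMap Fq (MvPolynomial (Fin r) Fq)) ((-1 : Fq) ^ (w j)))))
        = MvPolynomial.C ((-1 : Fq) ^ (w j)) := by
      rw [AlgHom.commutes]
      rfl
    rw [h1, h2, hej]
    have hsign : (MvPolynomial.C ((-1 : Fq) ^ (w j)) : MvPolynomial (Fin r) Fq)
        = (-1 : MvPolynomial (Fin r) Fq) ^ (r - (j.1 : ℕ)) := by
      rw [MvPolynomial.C_pow]; simp [hwdef]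
    rw [hsign]
  have hPhiinj : Function.Injective Φ := by
    rw [hfactor]
    simp only [AlgHom.coe_comp]
    exact (Subtype.val_injective.comp
      ((MvPolynomial.esymmAlgHom_injective Fq (by simp)).comp
        (MvPolynomial.rename_injective e heinj))).comp hscinj
  -- decomposition of `R` into homogeneous pieces
  have hGtop : MvPolynomial.weightedHomogeneousComponent w d G ≠ 0 := by
    rw [hd]
    exact weightedHomogeneousComponent_top_ne_zero w hG
  have hsum : ∑ n ∈ Finset.range (d + 1),
      MvPolynomial.weightedHomogeneousComponent w n G = G :=
    sum_range_weightedHomogeneousComponent w G (le_of_eq hd.symm)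
  have hRsum : R = ∑ n ∈ Finset.range (d + 1),
      Φ (MvPolynomial.weightedHomogeneousComponent w n G) := by
    rw [hR, ← map_sum, hsum]
  have hhom : ∀ n, (Φ (MvPolynomial.weightedHomogeneousComponent w n G)).IsHomogeneous n :=
    fun n => aeval_isHomogeneous_of_isWeightedHomogeneous w f hfhom
      (MvPolynomial.weightedHomogeneousComponent_isWeightedHomogeneous n G)
  have hcomp : MvPolynomial.homogeneousComponent d R
      = Φ (MvPolynomial.weightedHomogeneousComponent w d G) := by
    rw [hRsum, map_sum, Finset.sum_eq_single d]
    · rw [MvPolynomial.homogeneousComponent_of_mem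
        ((MvPolynomial.mem_homogeneousSubmodule _ _).mpr (hhom d)), if_pos rfl]
    · intro b _ hbd
      rw [MvPolynomial.homogeneousComponent_of_mem
        ((MvPolynomial.mem_homogeneousSubmodule _ _).mpr (hhom b)),
        if_neg (fun hh => hbd hh.symm)]
    · intro hmem
      exact absurd (Finset.self_mem_range_succ d) hmem
  have hPhitop : Φ (MvPolynomial.weightedHomogeneousComponent w d G) ≠ 0 := by
    intro h
    exact hGtop (hPhiinj (by rw [h, map_zero]))
  have hRne : R ≠ 0 := by
    intro h
    apply hPhitop
    rw [← hcomp, h, map_zero]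
  have hdeg : R.totalDegree = d := by
    apply le_antisymm
    · rw [hRsum]
      refine le_trans (MvPolynomial.totalDegree_finset_sum _ _) (Finset.sup_le ?_)
      intro n hn
      refine le_trans (hhom n).totalDegree_le ?_
      rw [Finset.mem_range, Nat.lt_succ_iff] at hn
      exact hn
    · by_contra hlt
      push_neg at hlt
      exact hPhitop (by rw [← hcomp, MvPolynomial.homogeneousComponent_eq_zero _ R hlt])
  exact ⟨hRne, hdeg, hcomp⟩
end

section
/- Let K be an algebraic closure of a finite field F_q and let F_1,…,F_m ∈ K[A_0,…,A_{r−1}] be nonzero polynomials. Fix an assignment of a positive integer weight wt(A_j) to each variable A_j, and for a nonzero polynomial F let F^wt denote its component of highest weight (its weighted-homogeneous component of weighted degree equal to its weighted total degree). If F_1^wt,…,F_m^wt form a regular sequence of K[A_0,…,A_{r−1}], then F_1,…,F_m form a regular sequence of K[A_0,…,A_{r−1}]. -/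
open MvPolynomial Finsupp

namespace RegularAux

variable {K : Type} [Field K] {r : ℕ}

section Basics
variable (w : Fin r → ℕ)

lemma degLE_iff (p : MvPolynomial (Fin r) K) (n : ℕ) :
    weightedTotalDegree w p ≤ n ↔ ∀ d ∈ p.support, weight w d ≤ n := by
  rw [weightedTotalDegree]; exact Finset.sup_le_iff

variable {w}

lemma weight_le_deg {p : MvPolynomial (Fin r) K} {d : Fin r →₀ ℕ}
    (hd : coeff d p ≠ 0) : weight w d ≤ weightedTotalDegree w p :=
  le_weightedTotalDegree w (MvPolynomial.mem_support_iff.2 hd)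

/-- sum of components up to a degree bound recovers the polynomial -/
lemma sum_comp_of_degLE (p : MvPolynomial (Fin r) K) (P : ℕ)
    (hp : weightedTotalDegree w p ≤ P) :
    ∑ n ∈ Finset.range (P + 1), weightedHomogeneousComponent w n p = p := by
  classical
  ext d
  rw [MvPolynomial.coeff_sum]
  simp only [coeff_weightedHomogeneousComponent]
  rw [Finset.sum_ite_eq (Finset.range (P + 1)) (weight w d) (fun _ => coeff d p)]
  split_ifs with h
  · rfl
  · by_contra hc
    exact h (Finset.mem_range.2 (Nat.lt_succ_of_le (le_trans (weight_le_deg fun hz => hc hz.symm) hp)))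

/-- component of a product with a homogeneous polynomial -/
lemma comp_mul_homog (c y : MvPolynomial (Fin r) K) (e D : ℕ)
    (hy : IsWeightedHomogeneous w y e) :
    weightedHomogeneousComponent w D (c * y) =
      (if e ≤ D then weightedHomogeneousComponent w (D - e) c else 0) * y := by
  classical
  have hdecomp : c * y =
      ∑ u ∈ Finset.range (weightedTotalDegree w c + 1),
        weightedHomogeneousComponent w u c * y := by
    rw [← Finset.sum_mul, sum_comp_of_degLE c _ le_rfl]
  rw [hdecomp, map_sum]
  have hterm : ∀ u, weightedHomogeneousComponent w D (weightedHomogeneousComponent w u c * y) =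
      if u + e = D then weightedHomogeneousComponent w u c * y else 0 := by
    intro u
    have hh : IsWeightedHomogeneous w (weightedHomogeneousComponent w u c * y) (u + e) :=
      (weightedHomogeneousComponent_isWeightedHomogeneous u c).mul hy
    by_cases huv : u + e = D
    · rw [if_pos huv, ← huv, IsWeightedHomogeneous.weightedHomogeneousComponent_same hh]
    · rw [if_neg huv, IsWeightedHomogeneous.weightedHomogeneousComponent_ne _ hh (Ne.symm huv)]
  calc ∑ u ∈ Finset.range (weightedTotalDegree w c + 1),
        weightedHomogeneousComponent w D (weightedHomogeneousComponent w u c * y)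
      = ∑ u ∈ Finset.range (weightedTotalDegree w c + 1),
        if u + e = D then weightedHomogeneousComponent w u c * y else 0 := by
        exact Finset.sum_congr rfl fun u _ => hterm u
    _ = _ := by
        rw [Finset.sum_eq_single (D - e)]
        · by_cases he : e ≤ D
          · rw [if_pos (by omega), if_pos he]
          · rw [if_neg (by omega), if_neg he, zero_mul]
        · intro u _ hu
          rw [if_neg (by omega)]
        · intro hmem
          simp only [Finset.mem_range, not_lt] at hmem
          by_cases he : e ≤ D
          · rw [if_pos (by omega), weightedHomogeneousComponent_eq_zero _ c (by omega), zero_mul]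
          · rw [if_neg (by omega)]

/-- top component of product of degree-bounded polynomials -/
lemma comp_mul_of_degLE (p q : MvPolynomial (Fin r) K) (P Q : ℕ)
    (hp : weightedTotalDegree w p ≤ P) (hq : weightedTotalDegree w q ≤ Q) :
    weightedHomogeneousComponent w (P + Q) (p * q) =
      weightedHomogeneousComponent w P p * weightedHomogeneousComponent w Q q := by
  classical
  have hdecomp : p * q = ∑ v ∈ Finset.range (Q + 1),
      p * weightedHomogeneousComponent w v q := by
    rw [← Finset.mul_sum, sum_comp_of_degLE q Q hq]
  rw [hdecomp, map_sum]
  have hterm : ∀ v ∈ Finset.range (Q + 1),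
      weightedHomogeneousComponent w (P + Q) (p * weightedHomogeneousComponent w v q) =
      if v = Q then weightedHomogeneousComponent w P p * weightedHomogeneousComponent w Q q
        else 0 := by
    intro v hv
    simp only [Finset.mem_range] at hv
    rw [comp_mul_homog p _ v _ (weightedHomogeneousComponent_isWeightedHomogeneous v q)]
    by_cases hvQ : v = Q
    · have hPQ : P + Q - Q = P := by omega
      rw [hvQ, if_pos (Nat.le_add_left Q P), if_pos rfl, hPQ]
    · rw [if_pos (by omega), if_neg hvQ,
        weightedHomogeneousComponent_eq_zero _ p (by omega), zero_mul]
  rw [Finset.sum_congr rfl hterm, Finset.sum_ite_eq' (Finset.range (Q + 1)) Q,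
    if_pos (by simp)]

lemma top_ne_zero {p : MvPolynomial (Fin r) K} (hp : p ≠ 0) :
    weightedHomogeneousComponent w (weightedTotalDegree w p) p ≠ 0 := by
  classical
  obtain ⟨d, hd, hsup⟩ := Finset.exists_mem_eq_sup p.support
    (by rwa [Finset.nonempty_iff_ne_empty, Ne, MvPolynomial.support_eq_empty]) (fun s => weight w s)
  intro hc
  have := congrArg (coeff d) hc
  rw [coeff_weightedHomogeneousComponent, if_pos (by rw [weightedTotalDegree, hsup]),
    coeff_zero] at this
  exact (MvPolynomial.mem_support_iff.1 hd) this

lemma comp_ne_zero_le {p : MvPolynomial (Fin r) K} {n : ℕ}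
    (h : weightedHomogeneousComponent w n p ≠ 0) : n ≤ weightedTotalDegree w p := by
  by_contra hc
  exact h (weightedHomogeneousComponent_eq_zero _ p (by omega))

lemma deg_mul_le (p q : MvPolynomial (Fin r) K) :
    weightedTotalDegree w (p * q) ≤ weightedTotalDegree w p + weightedTotalDegree w q := by
  classical
  rw [degLE_iff]
  intro d hd
  obtain ⟨u, hu, v, hv, rfl⟩ := Finset.mem_add.1 (MvPolynomial.support_mul p q hd)
  rw [map_add]
  exact add_le_add (le_weightedTotalDegree w hu) (le_weightedTotalDegree w hv)

lemma deg_mul (p q : MvPolynomial (Fin r) K) (hp : p ≠ 0) (hq : q ≠ 0) :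
    weightedTotalDegree w (p * q) = weightedTotalDegree w p + weightedTotalDegree w q := by
  refine le_antisymm (deg_mul_le p q) (comp_ne_zero_le ?_)
  rw [comp_mul_of_degLE p q _ _ le_rfl le_rfl]
  exact mul_ne_zero (top_ne_zero hp) (top_ne_zero hq)

lemma top_mul (p q : MvPolynomial (Fin r) K) (hp : p ≠ 0) (hq : q ≠ 0) :
    weightedHomogeneousComponent w (weightedTotalDegree w (p * q)) (p * q) =
      weightedHomogeneousComponent w (weightedTotalDegree w p) p *
        weightedHomogeneousComponent w (weightedTotalDegree w q) q := by
  rw [deg_mul p q hp hq, comp_mul_of_degLE p q _ _ le_rfl le_rfl]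

lemma comp_idem (p : MvPolynomial (Fin r) K) (n : ℕ) :
    weightedHomogeneousComponent w n (weightedHomogeneousComponent w n p) =
      weightedHomogeneousComponent w n p :=
  IsWeightedHomogeneous.weightedHomogeneousComponent_same
    (weightedHomogeneousComponent_isWeightedHomogeneous n p)

lemma support_sub_comp {p : MvPolynomial (Fin r) K} {n : ℕ} {d : Fin r →₀ ℕ}
    (hd : d ∈ (p - weightedHomogeneousComponent w n p).support) :
    d ∈ p.support ∧ weight w d ≠ n := by
  classical
  rw [MvPolynomial.mem_support_iff, MvPolynomial.coeff_sub,
    coeff_weightedHomogeneousComponent] at hd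
  by_cases hw : weight w d = n
  · rw [if_pos hw, sub_self] at hd; exact absurd rfl hd
  · rw [if_neg hw, sub_zero] at hd
    exact ⟨MvPolynomial.mem_support_iff.2 hd, hw⟩

end Basics


section Syzygy


variable {A : Type*} [CommRing A]

/-- Each element is a nonzerodivisor modulo the ideal generated by its predecessors. -/
def PrefixNZD {n : ℕ} (x : Fin n → A) : Prop :=
  ∀ (k : Fin n) (g : A),
    x k * g ∈ Ideal.span (x '' {i | i < k}) → g ∈ Ideal.span (x '' {i | i < k})

lemma image_Iio_castLE {n k : ℕ} (hk : k ≤ n) (x : Fin n → A) (j : Fin k) :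
    (fun i : Fin k => x (Fin.castLE hk i)) '' {i | i < j} =
      x '' {i | i < Fin.castLE hk j} := by
  ext y
  constructor
  · rintro ⟨i, hi, rfl⟩
    exact ⟨Fin.castLE hk i, hi, rfl⟩
  · rintro ⟨i, hi, rfl⟩
    have hij : (i : ℕ) < (j : ℕ) := hi
    have hi' : i.val < k := lt_of_lt_of_le hij j.isLt.le
    exact ⟨⟨i.val, hi'⟩, hij, congrArg x (Fin.ext rfl)⟩

lemma prefixNZD_castLE {n k : ℕ} (hk : k ≤ n) {x : Fin n → A} (hx : PrefixNZD x) :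
    PrefixNZD (fun i : Fin k => x (Fin.castLE hk i)) := by
  intro j g hg
  rw [image_Iio_castLE hk x j] at hg ⊢
  exact hx (Fin.castLE hk j) g hg

lemma image_Iio_last {n : ℕ} (x : Fin (n + 1) → A) :
    x '' {i | i < Fin.last n} = Set.range (fun i : Fin n => x i.castSucc) := by
  ext y
  constructor
  · rintro ⟨i, hi, rfl⟩
    have hi' : i.val < n := hi
    exact ⟨⟨i.val, hi'⟩, congrArg x (Fin.ext rfl)⟩
  · rintro ⟨i, rfl⟩
    exact ⟨i.castSucc, i.isLt, rfl⟩

lemma syzygy {n : ℕ} (x : Fin n → A) (hx : PrefixNZD x)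
    (a : Fin n → A) (ha : ∑ i, a i * x i = 0) :
    ∃ c : Fin n → Fin n → A, (∀ i, c i i = 0) ∧ (∀ i j, c i j = - c j i) ∧
      ∀ i, a i = ∑ j, c i j * x j := by
  induction n with
  | zero => exact ⟨fun i => i.elim0, fun i => i.elim0, fun i => i.elim0, fun i => i.elim0⟩
  | succ n ih =>
    rw [Fin.sum_univ_castSucc] at ha
    have hmem : x (Fin.last n) * a (Fin.last n) ∈
        Ideal.span (x '' {i | i < Fin.last n}) := by
      have heq : x (Fin.last n) * a (Fin.last n) =
          -∑ i : Fin n, a i.castSucc * x i.castSucc := by linear_combination ha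
      rw [heq]
      refine neg_mem (Ideal.sum_mem _ fun i _ => Ideal.mul_mem_left _ _ ?_)
      exact Ideal.subset_span ⟨i.castSucc, i.isLt, rfl⟩
    have halast := hx (Fin.last n) (a (Fin.last n)) hmem
    rw [image_Iio_last x] at halast
    obtain ⟨b, hb⟩ := (Submodule.mem_span_range_iff_exists_fun A).1 halast
    simp only [smul_eq_mul] at hb
    set x' : Fin n → A := fun i => x i.castSucc with hx'
    have hx'pre : PrefixNZD x' := by
      have h1 : x' = fun i : Fin n => x (Fin.castLE (Nat.le_succ n) i) := rfl
      rw [h1]; exact prefixNZD_castLE (Nat.le_succ n) hx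
    set a' : Fin n → A := fun (i : Fin n) => a i.castSucc + b i * x (Fin.last n) with ha'
    have hrel : ∑ i, a' i * x' i = 0 := by
      have expand : ∑ i, a' i * x' i =
          ∑ i : Fin n, a i.castSucc * x i.castSucc +
            (∑ i : Fin n, b i * x i.castSucc) * x (Fin.last n) := by
        rw [Finset.sum_mul, ← Finset.sum_add_distrib]
        exact Finset.sum_congr rfl fun i _ => by simp only [ha', hx']; ring
      rw [expand, hb]
      exact ha
    obtain ⟨c', hdiag, hanti, hrep⟩ := ih x' hx'pre a' hrel
    refine ⟨fun i j => Fin.lastCases (motive := fun _ => A)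
        (Fin.lastCases (motive := fun _ => A) 0 (fun j' => b j') j)
        (fun i' => Fin.lastCases (motive := fun _ => A) (-(b i')) (fun j' => c' i' j') j) i,
      ?_, ?_, ?_⟩
    · intro i
      induction i using Fin.lastCases with
      | last => simp
      | cast i' => simp [hdiag]
    · intro i j
      induction i using Fin.lastCases with
      | last =>
        induction j using Fin.lastCases with
        | last => simp
        | cast j' => simp
      | cast i' =>
        induction j using Fin.lastCases with
        | last => simp
        | cast j' => simp [hanti i' j']
    · intro i
      induction i using Fin.lastCases with
      | last =>
        rw [Fin.sum_univ_castSucc]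
        simp only [Fin.lastCases_last, Fin.lastCases_castSucc, zero_mul, add_zero]
        exact hb.symm
      | cast i' =>
        rw [Fin.sum_univ_castSucc]
        simp only [Fin.lastCases_last, Fin.lastCases_castSucc]
        have := hrep i'
        simp only [ha', hx'] at this
        have h2 : a i'.castSucc = ∑ j : Fin n, c' i' j * x j.castSucc - b i' * x (Fin.last n) := by
          linear_combination this
        rw [h2]
        ring


end Syzygy

section LemmaA

variable {w : Fin r → ℕ}

lemma mem_support_sum {ι : Type*} {s : Finset ι} {p : ι → MvPolynomial (Fin r) K}
    {m : Fin r →₀ ℕ} (hm : m ∈ (∑ j ∈ s, p j).support) : ∃ j ∈ s, m ∈ (p j).support := by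
  classical
  by_contra hc
  push_neg at hc
  rw [MvPolynomial.mem_support_iff, MvPolynomial.coeff_sum] at hm
  exact hm (Finset.sum_eq_zero fun j hj => MvPolynomial.notMem_support_iff.1 (hc j hj))

lemma deg_sum_le {ι : Type*} {s : Finset ι} {p : ι → MvPolynomial (Fin r) K} {N : ℕ}
    (hp : ∀ j ∈ s, weightedTotalDegree w (p j) ≤ N) :
    weightedTotalDegree w (∑ j ∈ s, p j) ≤ N := by
  rw [degLE_iff]
  intro m hm
  obtain ⟨j, hj, hmj⟩ := mem_support_sum hm
  exact le_trans (le_weightedTotalDegree w hmj) (hp j hj)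

/-- Main lemma: if the top components form a prefix-regular sequence, then the top
component of any nonzero element of the ideal lies in the ideal of top components. -/
lemma top_mem_span_top (w : Fin r → ℕ) {n : ℕ} (f : Fin n → MvPolynomial (Fin r) K)
    (hx : PrefixNZD (fun i =>
      weightedHomogeneousComponent w (weightedTotalDegree w (f i)) (f i)))
    (he : ∀ i, 1 ≤ weightedTotalDegree w (f i)) :
    ∀ (d : ℕ) (h : Fin n → MvPolynomial (Fin r) K),
      (∀ i, h i = 0 ∨ weightedTotalDegree w (h i) + weightedTotalDegree w (f i) ≤ d) →
      ∀ g : MvPolynomial (Fin r) K, (∑ i, h i * f i) = g → g ≠ 0 →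
      weightedHomogeneousComponent w (weightedTotalDegree w g) g ∈
        Ideal.span (Set.range (fun i =>
          weightedHomogeneousComponent w (weightedTotalDegree w (f i)) (f i))) := by
  set x : Fin n → MvPolynomial (Fin r) K := fun i =>
    weightedHomogeneousComponent w (weightedTotalDegree w (f i)) (f i) with hxdef
  set e : Fin n → ℕ := fun i => weightedTotalDegree w (f i) with hedef
  intro d
  induction d with
  | zero =>
    intro h hh g hg hgne
    have hz : ∀ i, h i = 0 := fun i => (hh i).resolve_right (by have := he i; omega)
    exact absurd (hg.symm.trans (Finset.sum_eq_zero fun i _ => by rw [hz i, zero_mul])) hgne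
  | succ d IH =>
    intro h hh g hg hgne
    set a : Fin n → MvPolynomial (Fin r) K := fun i =>
      weightedHomogeneousComponent w (d + 1 - e i) (h i) with hadef
    have hxhom : ∀ j, IsWeightedHomogeneous w (x j) (e j) :=
      fun j => weightedHomogeneousComponent_isWeightedHomogeneous _ _
    have claim1 : weightedHomogeneousComponent w (d + 1) g = ∑ i, a i * x i := by
      rw [← hg, map_sum]
      refine Finset.sum_congr rfl fun i _ => ?_
      rcases hh i with h0 | hle
      · simp [h0, hadef]
      · have hEi : e i = weightedTotalDegree w (f i) := rfl
        have h1 : (d + 1 : ℕ) = (d + 1 - e i) + e i := by omega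
        rw [h1, comp_mul_of_degLE (h i) (f i) (d + 1 - e i) (e i) (by omega) le_rfl]
    have hdegg : weightedTotalDegree w g ≤ d + 1 := by
      rw [← hg]
      refine deg_sum_le fun i _ => ?_
      rcases hh i with h0 | hle
      · simp [h0, weightedTotalDegree_zero]
      · exact le_trans (deg_mul_le _ _) hle
    by_cases hcase : weightedTotalDegree w g = d + 1
    · rw [hcase, claim1]
      exact Ideal.sum_mem _ fun i _ =>
        Ideal.mul_mem_left _ _ (Ideal.subset_span ⟨i, rfl⟩)
    · -- top cancellation case
      have hzero : weightedHomogeneousComponent w (d + 1) g = 0 :=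
        weightedHomogeneousComponent_eq_zero _ g (by omega)
      have hrel : ∑ i, a i * x i = 0 := by rw [← claim1, hzero]
      obtain ⟨c, hcd, hca, hcr⟩ := syzygy x hx a hrel
      set ct : Fin n → Fin n → MvPolynomial (Fin r) K := fun i j =>
        if e i + e j ≤ d + 1 then
          weightedHomogeneousComponent w (d + 1 - e i - e j) (c i j) else 0 with hctdef
      have hctd : ∀ i, ct i i = 0 := by
        intro i
        simp only [hctdef]
        split_ifs with hcond
        · rw [hcd i, map_zero]
        · rfl
      have hcta : ∀ i j, ct i j = - ct j i := by
        intro i j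
        simp only [hctdef]
        by_cases hcond : e i + e j ≤ d + 1
        · rw [if_pos hcond, if_pos (by omega), hca i j, map_neg]
          have h2 : d + 1 - e j - e i = d + 1 - e i - e j := by omega
          rw [h2]
        · rw [if_neg hcond, if_neg (by omega), neg_zero]
      have hct : ∀ i, a i = ∑ j, ct i j * x j := by
        intro i
        by_cases hei : e i ≤ d + 1
        · have hcongr := congrArg (weightedHomogeneousComponent w (d + 1 - e i)) (hcr i)
          rw [map_sum] at hcongr
          have lhs : weightedHomogeneousComponent w (d + 1 - e i) (a i) = a i :=
            comp_idem (h i) (d + 1 - e i)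
          rw [lhs] at hcongr
          rw [hcongr]
          refine Finset.sum_congr rfl fun j _ => ?_
          rw [comp_mul_homog (c i j) (x j) (e j) (d + 1 - e i) (hxhom j)]
          simp only [hctdef]
          by_cases hcond : e i + e j ≤ d + 1
          · rw [if_pos (by omega), if_pos hcond]
          · rw [if_neg (by omega), if_neg hcond]
        · have h0 : h i = 0 := by
            have hEi : e i = weightedTotalDegree w (f i) := rfl
            rcases hh i with h0 | hle
            · exact h0
            · omega
          have lhs : a i = 0 := by simp [hadef, h0]
          rw [lhs]
          refine (Finset.sum_eq_zero fun j _ => ?_).symm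
          simp only [hctdef]
          rw [if_neg (by omega), zero_mul]
      set h' : Fin n → MvPolynomial (Fin r) K := fun i =>
        (h i - a i) + ∑ j, ct i j * (x j - f j) with h'def
      have key1 : ∑ i, ∑ j, ct i j * f j * f i = 0 := by
        rw [← Finset.sum_product']
        refine Finset.sum_involution (fun p _ => p.swap) ?_ ?_ ?_ ?_
        · intro p _
          rw [hcta p.1 p.2]
          simp only [Prod.fst_swap, Prod.snd_swap]
          ring
        · intro p _ hne hswap
          apply hne
          have hpp : p.2 = p.1 := by
            have := congrArg Prod.fst hswap
            simpa using this
          rw [hpp, hctd p.1, zero_mul, zero_mul]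
        · intro p _; exact Finset.mem_univ _
        · intro p _; exact Prod.swap_swap p
      have key2 : ∀ i, ∑ j, ct i j * x j * f i = a i * f i := by
        intro i
        rw [← Finset.sum_mul, ← hct i]
      have hsum : ∑ i, h' i * f i = g := by
        have hterm : ∀ i, h' i * f i =
            (h i * f i - a i * f i) +
              (∑ j, ct i j * x j * f i - ∑ j, ct i j * f j * f i) := by
          intro i
          simp only [h'def]
          rw [add_mul, sub_mul, Finset.sum_mul, ← Finset.sum_sub_distrib]
          congr 1
          exact Finset.sum_congr rfl fun j _ => by ring
        calc ∑ i, h' i * f i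
            = ∑ i, ((h i * f i - a i * f i) +
              (∑ j, ct i j * x j * f i - ∑ j, ct i j * f j * f i)) :=
              Finset.sum_congr rfl fun i _ => hterm i
          _ = (∑ i, h i * f i - ∑ i, a i * f i) +
              (∑ i, ∑ j, ct i j * x j * f i - ∑ i, ∑ j, ct i j * f j * f i) := by
              rw [Finset.sum_add_distrib, Finset.sum_sub_distrib, Finset.sum_sub_distrib]
          _ = g := by
              rw [key1, hg, Finset.sum_congr rfl fun i _ => key2 i]
              ring
      have hh' : ∀ i, h' i = 0 ∨
          weightedTotalDegree w (h' i) + weightedTotalDegree w (f i) ≤ d := by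
        intro i
        have hws : ∀ m ∈ (h' i).support, Finsupp.weight w m + e i ≤ d := by
          intro m hm
          simp only [h'def] at hm
          rcases Finset.mem_union.1 (MvPolynomial.support_add hm) with hm1 | hm2
          · -- from h i - a i
            obtain ⟨hmh, hwne⟩ := support_sub_comp hm1
            have hhne : h i ≠ 0 := fun hz => by simp [hz] at hmh
            have hEi : e i = weightedTotalDegree w (f i) := rfl
            have hle := (hh i).resolve_left hhne
            have hwle := le_weightedTotalDegree w hmh
            omega
          · obtain ⟨j, -, hmj⟩ := mem_support_sum hm2
            by_cases hcond : e i + e j ≤ d + 1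
            · have hct' : ct i j =
                  weightedHomogeneousComponent w (d + 1 - e i - e j) (c i j) := by
                simp only [hctdef]; rw [if_pos hcond]
              classical
              obtain ⟨u, hu, v, hv, rfl⟩ := Finset.mem_add.1
                (MvPolynomial.support_mul _ _ hmj)
              have hwu : Finsupp.weight w u = d + 1 - e i - e j := by
                rw [hct'] at hu
                exact weightedHomogeneousComponent_isWeightedHomogeneous _ _
                  (MvPolynomial.mem_support_iff.1 hu)
              have hvsupp : v ∈ (f j - x j).support := by
                rwa [show (f j - x j) = -(x j - f j) from (neg_sub _ _).symm,
                  MvPolynomial.support_neg]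
              obtain ⟨hvf, hvne⟩ := support_sub_comp hvsupp
              have hvle := le_weightedTotalDegree w hvf
              have hej := he j
              have hEi : e i = weightedTotalDegree w (f i) := rfl
              have hEj : e j = weightedTotalDegree w (f j) := rfl
              rw [map_add, hwu]
              omega
            · have : ct i j = 0 := by simp only [hctdef]; rw [if_neg hcond]
              rw [this, zero_mul] at hmj
              simp at hmj
        by_cases h0 : h' i = 0
        · exact Or.inl h0
        · right
          obtain ⟨m0, hm0⟩ := Finset.nonempty_iff_ne_empty.2
            (fun hc => h0 (MvPolynomial.support_eq_empty.1 hc))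
          have h1 : e i ≤ d := le_trans (Nat.le_add_left _ _) (hws m0 hm0)
          have h2 : weightedTotalDegree w (h' i) ≤ d - e i :=
            (degLE_iff w _ _).2 fun m hm => by have := hws m hm; omega
          have hEi : e i = weightedTotalDegree w (f i) := rfl
          omega
      exact IH h' hh' g hsum hgne

end LemmaA

section Translate

variable {A : Type*} [CommRing A]

lemma isSMulRegular_quot_iff (I : Ideal A) (c : A) :
    IsSMulRegular (A ⧸ (I • ⊤ : Submodule A A)) c ↔ ∀ g, c * g ∈ I → g ∈ I := by
  have hIT : (I • ⊤ : Submodule A A) = I := by rw [smul_eq_mul, Ideal.mul_top]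
  constructor
  · intro hreg g hg
    have h1 : c • (Submodule.Quotient.mk g : A ⧸ (I • ⊤ : Submodule A A)) =
        c • (Submodule.Quotient.mk 0 : A ⧸ (I • ⊤ : Submodule A A)) := by
      rw [← Submodule.Quotient.mk_smul, ← Submodule.Quotient.mk_smul,
        Submodule.Quotient.eq, hIT]
      simpa [smul_eq_mul] using hg
    have h2 := hreg h1
    rw [Submodule.Quotient.eq, hIT, sub_zero] at h2
    exact h2
  · intro h u v huv
    obtain ⟨a, rfl⟩ := Submodule.Quotient.mk_surjective _ u
    obtain ⟨b, rfl⟩ := Submodule.Quotient.mk_surjective _ v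
    simp only at huv
    rw [← Submodule.Quotient.mk_smul, ← Submodule.Quotient.mk_smul,
      Submodule.Quotient.eq, hIT] at huv
    rw [Submodule.Quotient.eq, hIT]
    exact h _ (by simpa [smul_eq_mul, mul_sub] using huv)

lemma ofList_ofFn {n : ℕ} (x : Fin n → A) :
    Ideal.ofList (List.ofFn x) = Ideal.span (Set.range x) := by
  unfold Ideal.ofList
  congr 1
  ext y
  simp [List.mem_ofFn]

lemma ofList_take_ofFn {n : ℕ} (x : Fin n → A) (k : Fin n) :
    Ideal.ofList ((List.ofFn x).take k.val) = Ideal.span (x '' {i | i < k}) := by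
  unfold Ideal.ofList
  congr 1
  ext y
  simp only [Set.mem_setOf_eq, Set.mem_image, List.mem_take_iff_getElem]
  constructor
  · rintro ⟨i, hm, rfl⟩
    have hik : i < k.val := lt_of_lt_of_le hm (min_le_left _ _)
    have hi : i < n := lt_of_lt_of_le hm (le_trans (min_le_right _ _) (by simp))
    exact ⟨⟨i, hi⟩, hik, (List.getElem_ofFn (hm.trans_le (min_le_right _ _))).symm⟩
  · rintro ⟨i, hik, rfl⟩
    have hik' : (i : ℕ) < k.val := hik
    refine ⟨i.val, by simp only [List.length_ofFn]; exact lt_min hik' i.isLt, ?_⟩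
    exact (List.getElem_ofFn _).trans (congrArg x (Fin.ext rfl))

lemma isWeaklyRegular_ofFn_iff {n : ℕ} (x : Fin n → A) :
    RingTheory.Sequence.IsWeaklyRegular A (List.ofFn x) ↔ PrefixNZD x := by
  rw [RingTheory.Sequence.isWeaklyRegular_iff]
  constructor
  · intro H k g hg
    have hk : (k : ℕ) < (List.ofFn x).length := by simp
    have h1 := H k.val hk
    rw [show ((List.ofFn x)[(k : ℕ)] = x k) from
        (List.getElem_ofFn _).trans (congrArg x (Fin.ext rfl)),
      ofList_take_ofFn x k, isSMulRegular_quot_iff] at h1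
    exact h1 g hg
  · intro H i hi
    have hi' : i < n := by simpa using hi
    rw [show ((List.ofFn x)[i] = x ⟨i, hi'⟩) from List.getElem_ofFn _,
      show (List.take i (List.ofFn x) = List.take (Fin.val (⟨i, hi'⟩ : Fin n)) (List.ofFn x))
        from rfl,
      ofList_take_ofFn x ⟨i, hi'⟩, isSMulRegular_quot_iff]
    exact H ⟨i, hi'⟩

lemma top_ne_ofFn_iff {n : ℕ} (x : Fin n → A) :
    ((⊤ : Submodule A A) ≠ Ideal.ofList (List.ofFn x) • ⊤) ↔
      Ideal.span (Set.range x) ≠ ⊤ := by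
  rw [ofList_ofFn, smul_eq_mul, Ideal.mul_top, ne_comm]

lemma image_Iio_eq_range {n : ℕ} (x : Fin n → A) (k : Fin n) :
    x '' {i | i < k} = Set.range (fun i : Fin k.val => x (Fin.castLE k.isLt.le i)) := by
  ext y
  constructor
  · rintro ⟨i, hi, rfl⟩
    exact ⟨⟨i.val, hi⟩, congrArg x (Fin.ext rfl)⟩
  · rintro ⟨i, rfl⟩
    exact ⟨Fin.castLE k.isLt.le i, i.isLt, rfl⟩

end Translate

section Final

variable {w : Fin r → ℕ}

lemma deg_comp_le (p : MvPolynomial (Fin r) K) (n : ℕ) :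
    weightedTotalDegree w (weightedHomogeneousComponent w n p) ≤ n :=
  (degLE_iff w _ _).2 fun m hm => le_of_eq
    (weightedHomogeneousComponent_isWeightedHomogeneous n p (MvPolynomial.mem_support_iff.1 hm))

lemma eq_C_of_deg_zero (hw : ∀ j : Fin r, 0 < w j) {p : MvPolynomial (Fin r) K}
    (hdeg : weightedTotalDegree w p = 0) : p = C (coeff 0 p) := by
  classical
  have : Finsupp.NonTorsionWeight ℕ w := by
    apply Finsupp.nonTorsionWeight_of
    intro i
    exact (hw i).ne'
  ext d
  rw [coeff_C]
  by_cases hd : (0 : Fin r →₀ ℕ) = d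
  · rw [if_pos hd, ← hd]
  · rw [if_neg hd]
    by_contra hne
    have hsupp : d ∈ p.support := MvPolynomial.mem_support_iff.2 hne
    have hle := le_weightedTotalDegree w hsupp
    rw [hdeg, Nat.le_zero] at hle
    exact hd ((Finsupp.weight_eq_zero_iff_eq_zero w).1 hle).symm

lemma deg_one_eq_zero : weightedTotalDegree w (1 : MvPolynomial (Fin r) K) = 0 := by
  classical
  refine Nat.le_zero.1 ((degLE_iff w _ _).2 fun m hm => ?_)
  have := MvPolynomial.mem_support_iff.1 hm
  rw [MvPolynomial.coeff_one] at this
  have hm0 : (0 : Fin r →₀ ℕ) = m := by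
    by_contra hc; rw [if_neg hc] at this; exact this rfl
  rw [← hm0, map_zero]

set_option maxHeartbeats 2000000 in
/-- Nonzerodivisor upgrade: if the top components are prefix-regular (and the span of the
tops is proper), then the original sequence is prefix-regular. -/
lemma prefixNZD_of_tops (hw : ∀ j : Fin r, 0 < w j) {m : ℕ}
    (F : Fin m → MvPolynomial (Fin r) K) (hF : ∀ t, F t ≠ 0)
    (hx : PrefixNZD (fun t =>
      weightedHomogeneousComponent w (weightedTotalDegree w (F t)) (F t)))
    (hproper : Ideal.span (Set.range (fun t =>
      weightedHomogeneousComponent w (weightedTotalDegree w (F t)) (F t))) ≠ ⊤)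
    (he : ∀ t, 1 ≤ weightedTotalDegree w (F t)) :
    PrefixNZD F := by
  classical
  intro k g₀ hg₀
  suffices H : ∀ (N : ℕ) (g : MvPolynomial (Fin r) K), weightedTotalDegree w g ≤ N →
      F k * g ∈ Ideal.span (F '' {i | i < k}) → g ∈ Ideal.span (F '' {i | i < k}) from
    H _ g₀ le_rfl hg₀
  intro N
  induction N using Nat.strong_induction_on with
  | _ N IH =>
  intro g hgN hmem
  by_cases hg0 : g = 0
  · rw [hg0]; exact Ideal.zero_mem _
  have hGne : F k * g ≠ 0 := mul_ne_zero (hF k) hg0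
  have himg : F '' {i | i < k} =
      Set.range (fun i : Fin k.val => F (Fin.castLE k.isLt.le i)) := image_Iio_eq_range F k
  rw [himg] at hmem ⊢
  obtain ⟨h, hh⟩ := (Submodule.mem_span_range_iff_exists_fun _).1 hmem
  simp only [smul_eq_mul] at hh
  have hx' := prefixNZD_castLE k.isLt.le hx
  beta_reduce at hx'
  have he' : ∀ i : Fin k.val, 1 ≤ weightedTotalDegree w (F (Fin.castLE k.isLt.le i)) :=
    fun i => he _
  have htopG := top_mem_span_top w (fun i : Fin k.val => F (Fin.castLE k.isLt.le i)) hx' he'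
    (Finset.univ.sup fun i : Fin k.val =>
      weightedTotalDegree w (h i) + weightedTotalDegree w (F (Fin.castLE k.isLt.le i))) h
    (fun i => Or.inr (Finset.le_sup
      (f := fun i : Fin k.val =>
        weightedTotalDegree w (h i) + weightedTotalDegree w (F (Fin.castLE k.isLt.le i)))
      (Finset.mem_univ i))) (F k * g) hh hGne
  have htopmul : weightedHomogeneousComponent w (weightedTotalDegree w (F k * g)) (F k * g) =
      weightedHomogeneousComponent w (weightedTotalDegree w (F k)) (F k) *
        weightedHomogeneousComponent w (weightedTotalDegree w g) g :=
    top_mul (F k) g (hF k) hg0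
  have hrange2 : Set.range (fun i : Fin k.val =>
      weightedHomogeneousComponent w
        (weightedTotalDegree w (F (Fin.castLE k.isLt.le i))) (F (Fin.castLE k.isLt.le i))) =
      (fun t => weightedHomogeneousComponent w (weightedTotalDegree w (F t)) (F t)) ''
        {i | i < k} :=
    (image_Iio_eq_range
      (fun t => weightedHomogeneousComponent w (weightedTotalDegree w (F t)) (F t)) k).symm
  rw [htopmul, hrange2] at htopG
  have htopg := hx k _ htopG
  by_cases hdeg0 : weightedTotalDegree w g = 0
  · exfalso
    have hC : g = C (coeff 0 g) := eq_C_of_deg_zero hw hdeg0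
    have hane : coeff 0 g ≠ 0 := fun h0 => hg0 (by rw [hC, h0, map_zero])
    have htopeq : weightedHomogeneousComponent w (weightedTotalDegree w g) g = g := by
      rw [hdeg0]
      nth_rewrite 1 [hC]
      rw [IsWeightedHomogeneous.weightedHomogeneousComponent_same
        (isWeightedHomogeneous_C w _), ← hC]
    rw [htopeq] at htopg
    have hunit : IsUnit g := by
      rw [hC]; exact (isUnit_iff_ne_zero.2 hane).map C
    have hIio_top : Ideal.span
        ((fun t => weightedHomogeneousComponent w (weightedTotalDegree w (F t)) (F t)) ''
          {i | i < k}) = ⊤ :=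
      Ideal.eq_top_of_isUnit_mem _ htopg hunit
    refine hproper (eq_top_iff.2 ?_)
    rw [← hIio_top]
    refine Ideal.span_mono ?_
    rintro y ⟨i, -, rfl⟩
    exact ⟨i, rfl⟩
  · -- descent
    rw [image_Iio_eq_range
      (fun t => weightedHomogeneousComponent w (weightedTotalDegree w (F t)) (F t)) k] at htopg
    obtain ⟨cc, hcc⟩ := (Submodule.mem_span_range_iff_exists_fun _).1 htopg
    simp only [smul_eq_mul] at hcc
    set ct : Fin k.val → MvPolynomial (Fin r) K := fun i =>
      if weightedTotalDegree w (F (Fin.castLE k.isLt.le i)) ≤ weightedTotalDegree w g then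
        weightedHomogeneousComponent w
          (weightedTotalDegree w g - weightedTotalDegree w (F (Fin.castLE k.isLt.le i))) (cc i)
      else 0 with hctdef
    have step1 : ∑ i : Fin k.val, ct i *
        weightedHomogeneousComponent w
          (weightedTotalDegree w (F (Fin.castLE k.isLt.le i))) (F (Fin.castLE k.isLt.le i)) =
        weightedHomogeneousComponent w (weightedTotalDegree w g) g := by
      have hcongr := congrArg (weightedHomogeneousComponent w (weightedTotalDegree w g)) hcc
      rw [map_sum, comp_idem g (weightedTotalDegree w g)] at hcongr
      rw [← hcongr]
      refine Finset.sum_congr rfl fun i _ => ?_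
      rw [comp_mul_homog (cc i) _
        (weightedTotalDegree w (F (Fin.castLE k.isLt.le i))) (weightedTotalDegree w g)
        (weightedHomogeneousComponent_isWeightedHomogeneous _ _)]
    have hFg' : F k * (g - ∑ i : Fin k.val, ct i * F (Fin.castLE k.isLt.le i)) ∈
        Ideal.span (Set.range (fun i : Fin k.val => F (Fin.castLE k.isLt.le i))) := by
      rw [mul_sub]
      refine Submodule.sub_mem _ hmem (Ideal.mul_mem_left _ _ (Ideal.sum_mem _ fun i _ =>
        Ideal.mul_mem_left _ _ (Ideal.subset_span ⟨i, rfl⟩)))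
    by_cases hg'0 : g - ∑ i : Fin k.val, ct i * F (Fin.castLE k.isLt.le i) = 0
    · have hgeq : g = ∑ i : Fin k.val, ct i * F (Fin.castLE k.isLt.le i) := by
        rw [sub_eq_zero] at hg'0
        exact hg'0
      rw [hgeq]
      exact Ideal.sum_mem _ fun i _ => Ideal.mul_mem_left _ _ (Ideal.subset_span ⟨i, rfl⟩)
    · have hcompDg : weightedHomogeneousComponent w (weightedTotalDegree w g)
          (g - ∑ i : Fin k.val, ct i * F (Fin.castLE k.isLt.le i)) = 0 := by
        rw [map_sub, map_sum, ← step1]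
        have hcgr : ∀ i ∈ Finset.univ,
            weightedHomogeneousComponent w (weightedTotalDegree w g)
              (ct i * F (Fin.castLE k.isLt.le i)) =
            ct i * weightedHomogeneousComponent w
              (weightedTotalDegree w (F (Fin.castLE k.isLt.le i)))
              (F (Fin.castLE k.isLt.le i)) := by
          intro i _
          by_cases hcond :
              weightedTotalDegree w (F (Fin.castLE k.isLt.le i)) ≤ weightedTotalDegree w g
          · have h1 : weightedTotalDegree w g =
                (weightedTotalDegree w g - weightedTotalDegree w (F (Fin.castLE k.isLt.le i))) +
                  weightedTotalDegree w (F (Fin.castLE k.isLt.le i)) := by omega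
            have hctval : ct i = weightedHomogeneousComponent w
                (weightedTotalDegree w g -
                  weightedTotalDegree w (F (Fin.castLE k.isLt.le i))) (cc i) := by
              rw [hctdef]; exact if_pos hcond
            rw [h1, comp_mul_of_degLE (ct i) (F (Fin.castLE k.isLt.le i)) _ _
              (by rw [hctval]; exact deg_comp_le _ _) le_rfl]
            congr 1
            rw [hctval, comp_idem]
          · have hctval : ct i = 0 := by rw [hctdef]; exact if_neg hcond
            rw [hctval, zero_mul, map_zero, zero_mul]
        rw [Finset.sum_congr rfl hcgr, sub_self]
      have hdegle : weightedTotalDegree w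
          (g - ∑ i : Fin k.val, ct i * F (Fin.castLE k.isLt.le i)) ≤
            weightedTotalDegree w g := by
        rw [degLE_iff]
        intro mm hmm
        rw [sub_eq_add_neg] at hmm
        rcases Finset.mem_union.1 (MvPolynomial.support_add hmm) with hm1 | hm2
        · exact le_weightedTotalDegree w hm1
        · rw [MvPolynomial.support_neg] at hm2
          obtain ⟨j, -, hmj⟩ := mem_support_sum hm2
          by_cases hcond :
              weightedTotalDegree w (F (Fin.castLE k.isLt.le j)) ≤ weightedTotalDegree w g
          · have hctval : ct j = weightedHomogeneousComponent w
                (weightedTotalDegree w g -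
                  weightedTotalDegree w (F (Fin.castLE k.isLt.le j))) (cc j) := by
              rw [hctdef]; exact if_pos hcond
            obtain ⟨u, hu, v, hv, rfl⟩ := Finset.mem_add.1 (MvPolynomial.support_mul _ _ hmj)
            have hwu : Finsupp.weight w u = weightedTotalDegree w g -
                weightedTotalDegree w (F (Fin.castLE k.isLt.le j)) := by
              rw [hctval] at hu
              exact weightedHomogeneousComponent_isWeightedHomogeneous _ _
                (MvPolynomial.mem_support_iff.1 hu)
            have hwv := le_weightedTotalDegree w hv
            rw [map_add, hwu]
            omega
          · have hctval : ct j = 0 := by rw [hctdef]; exact if_neg hcond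
            rw [hctval, zero_mul] at hmj
            simp at hmj
      have hlt : weightedTotalDegree w
          (g - ∑ i : Fin k.val, ct i * F (Fin.castLE k.isLt.le i)) <
            weightedTotalDegree w g := by
        rcases lt_or_eq_of_le hdegle with hlt | heq
        · exact hlt
        · exact absurd (heq ▸ hcompDg) (top_ne_zero hg'0)
      rw [← himg] at hFg'
      have hg'mem := IH _ (lt_of_lt_of_le hlt hgN) _ le_rfl hFg'
      rw [himg] at hg'mem
      have hgeq : g = (g - ∑ i : Fin k.val, ct i * F (Fin.castLE k.isLt.le i)) +
          ∑ i : Fin k.val, ct i * F (Fin.castLE k.isLt.le i) := by ring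
      rw [hgeq]
      exact Submodule.add_mem _ hg'mem
        (Ideal.sum_mem _ fun i _ => Ideal.mul_mem_left _ _ (Ideal.subset_span ⟨i, rfl⟩))

end Final

end RegularAux

open MvPolynomial

/-- If the components of highest weight `F_1^wt, …, F_m^wt` (with respect to a positive
integer weight on each variable) form a regular sequence of `K[A_0, …, A_{r-1}]`, then so
do `F_1, …, F_m`. -/
theorem regular_sequence_of_highest_weight_components_regular_sequence
    (Fq K : Type) [Field Fq] [Fintype Fq] [Field K] [Algebra Fq K] [IsAlgClosure Fq K]
    (r m : ℕ) (F : Fin m → MvPolynomial (Fin r) K) (hF : ∀ t, F t ≠ 0)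
    (w : Fin r → ℕ) (hw : ∀ j, 0 < w j)
    (hreg : RingTheory.Sequence.IsRegular (MvPolynomial (Fin r) K)
        (List.ofFn fun t => MvPolynomial.weightedHomogeneousComponent w
          (MvPolynomial.weightedTotalDegree w (F t)) (F t))) :
    RingTheory.Sequence.IsRegular (MvPolynomial (Fin r) K) (List.ofFn F) := by
  classical
  rw [RingTheory.Sequence.isRegular_iff] at hreg ⊢
  obtain ⟨hwreg, hne⟩ := hreg
  rw [RegularAux.isWeaklyRegular_ofFn_iff] at hwreg
  rw [RegularAux.top_ne_ofFn_iff] at hne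
  have he : ∀ t, 1 ≤ weightedTotalDegree w (F t) := by
    intro t
    by_contra hlt
    have hdeg0 : weightedTotalDegree w (F t) = 0 := by omega
    have hC : F t = C (coeff 0 (F t)) := RegularAux.eq_C_of_deg_zero hw hdeg0
    have hane : coeff 0 (F t) ≠ 0 := fun h0 => hF t (by rw [hC, h0, map_zero])
    have hunit : IsUnit (weightedHomogeneousComponent w
        (weightedTotalDegree w (F t)) (F t)) := by
      have heq : weightedHomogeneousComponent w (weightedTotalDegree w (F t)) (F t) = F t := by
        rw [hdeg0]
        nth_rewrite 1 [hC]
        rw [IsWeightedHomogeneous.weightedHomogeneousComponent_same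
          (isWeightedHomogeneous_C w _), ← hC]
      rw [heq, hC]
      exact (isUnit_iff_ne_zero.2 hane).map C
    exact hne (Ideal.eq_top_of_isUnit_mem _ (Ideal.subset_span ⟨t, rfl⟩) hunit)
  refine ⟨?_, ?_⟩
  · rw [RegularAux.isWeaklyRegular_ofFn_iff]
    exact RegularAux.prefixNZD_of_tops hw F hF hwreg hne he
  · rw [RegularAux.top_ne_ofFn_iff]
    intro htop
    have h1 : (1 : MvPolynomial (Fin r) K) ∈ Ideal.span (Set.range F) :=
      htop ▸ Submodule.mem_top
    obtain ⟨h, hh⟩ := (Submodule.mem_span_range_iff_exists_fun _).1 h1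
    simp only [smul_eq_mul] at hh
    have hone := RegularAux.top_mem_span_top w F hwreg he
      (Finset.univ.sup fun i => weightedTotalDegree w (h i) + weightedTotalDegree w (F i)) h
      (fun i => Or.inr (Finset.le_sup
        (f := fun i => weightedTotalDegree w (h i) + weightedTotalDegree w (F i))
        (Finset.mem_univ i))) 1 hh one_ne_zero
    rw [RegularAux.deg_one_eq_zero,
      IsWeightedHomogeneous.weightedHomogeneousComponent_same
        (isWeightedHomogeneous_one (R := K) w)] at hone
    exact hne ((Ideal.eq_top_iff_one _).2 hone)
end
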